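/- Let F : ℝ^d → ℝ be ℓ-weakly convex (ℓ ≥ 0), let X ⊆ ℝ^d be nonempty, closed and convex, let ρ > ℓ, and for x ∈ ℝ^d let x̂ := prox_{Φ/ρ}(x), where Φ := F + δ_X. Then there exists a subgradient ĝ ∈ ∂F(x̂) such that for every η > 0, x̂ = Π_X(ηρ x − η ĝ + (1 − ηρ) x̂). -/

import Mathlib

open MeasureTheory
open scoped RealInnerProductSpace

noncomputable section

/-- `q` is the Euclidean projection of `p` onto `X`. -/
def IsProjection {d : ℕ} (X : Set (EuclideanSpace ℝ (Fin d))) (p q : EuclideanSpace ℝ (Fin d)) : Prop :=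
  q ∈ X ∧ ∀ y ∈ X, ‖q - p‖ ≤ ‖y - p‖

/-- `F` is `ℓ`-weakly convex: `x ↦ F x + ℓ/2 ‖x‖²` is convex on `ℝ^d`. -/
def WeaklyConvex {d : ℕ} (ℓ : ℝ) (F : EuclideanSpace ℝ (Fin d) → ℝ) : Prop :=
  ConvexOn ℝ Set.univ fun x => F x + ℓ / 2 * ‖x‖ ^ 2

/-- The subdifferential of an `ℓ`-weakly convex function `F` at `x`. -/
def WCSubdiff {d : ℕ} (ℓ : ℝ) (F : EuclideanSpace ℝ (Fin d) → ℝ) (x : EuclideanSpace ℝ (Fin d)) : Set (EuclideanSpace ℝ (Fin d)) :=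
  {g | ∀ y, F x + ⟪g, y - x⟫ - ℓ / 2 * ‖y - x‖ ^ 2 ≤ F y}

/-- `q = prox_{Φ/ρ}(p)`, i.e. `q` minimizes `y ↦ F y + ρ/2 ‖y - p‖²` over `X`. -/
def IsProx {d : ℕ} (X : Set (EuclideanSpace ℝ (Fin d))) (F : EuclideanSpace ℝ (Fin d) → ℝ) (ρ : ℝ) (p q : EuclideanSpace ℝ (Fin d)) : Prop :=
  q ∈ X ∧ ∀ y ∈ X, F q + ρ / 2 * ‖q - p‖ ^ 2 ≤ F y + ρ / 2 * ‖y - p‖ ^ 2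

lemma expand_sq {d : ℕ} (a b : EuclideanSpace ℝ (Fin d)) (t : ℝ) :
    ‖a + t • b‖^2 = ‖a‖^2 + 2*t*⟪a,b⟫ + t^2*‖b‖^2 := by
  rw [norm_add_sq_real, real_inner_smul_right, norm_smul]
  simp [mul_pow, sq_abs]
  ring

set_option maxHeartbeats 1600000 in
/-- Lemma A.1 (Lemma 3.2 in Davis--Drusvyatskiy): the proximal point is a projection of a
subgradient-shifted point, for every step-size `η > 0`. -/
theorem prox_is_projection {d : ℕ}
    (X : Set (EuclideanSpace ℝ (Fin d))) (hXne : X.Nonempty) (hXcl : IsClosed X) (hXcvx : Convex ℝ X)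
    (F : EuclideanSpace ℝ (Fin d) → ℝ) (ℓ ρ : ℝ) (hℓ : 0 ≤ ℓ) (hρ : ℓ < ρ)
    (hWC : WeaklyConvex ℓ F)
    (x xhat : EuclideanSpace ℝ (Fin d)) (hprox : IsProx X F ρ x xhat) :
    ∃ ghat ∈ WCSubdiff ℓ F xhat,
      ∀ η : ℝ, 0 < η →
        IsProjection X ((η * ρ) • x - η • ghat + (1 - η * ρ) • xhat) xhat := by
  classical
  obtain ⟨hxX, hmin⟩ := hprox
  obtain ⟨G, hGdef⟩ : ∃ G : EuclideanSpace ℝ (Fin d) → ℝ,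
      G = fun y => F y + ℓ / 2 * ‖y‖ ^ 2 := ⟨_, rfl⟩
  have hGval : ∀ y, G y = F y + ℓ / 2 * ‖y‖ ^ 2 := fun y => by rw [hGdef]
  have hG : ConvexOn ℝ Set.univ G := by rw [hGdef]; exact hWC
  obtain ⟨w, hw⟩ : ∃ w : EuclideanSpace ℝ (Fin d),
      w = ρ • (x - xhat) + ℓ • xhat := ⟨_, rfl⟩
  have hwinner : ∀ z : EuclideanSpace ℝ (Fin d), ⟪w, z⟫ = ρ * ⟪x - xhat, z⟫ + ℓ * ⟪xhat, z⟫ := by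
    intro z; rw [hw, inner_add_left, real_inner_smul_left, real_inner_smul_left]
  -- Step 1: xhat minimizes G - ⟪w, ·⟫ over X
  have hφX : ∀ y ∈ X, G xhat + ⟪w, y - xhat⟫ ≤ G y := by
    intro y hy
    obtain ⟨c, hc⟩ : ∃ c : ℝ, c = (ρ - ℓ) / 2 * ‖y - xhat‖ ^ 2 := ⟨_, rfl⟩
    have hcnn : 0 ≤ c := by
      rw [hc]; apply mul_nonneg (by linarith) (by positivity)
    have key : ∀ t : ℝ, 0 < t → t ≤ 1 → G xhat + ⟪w, y - xhat⟫ ≤ G y + t * c := by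
      intro t ht ht1
      obtain ⟨z, hzdef⟩ : ∃ z : EuclideanSpace ℝ (Fin d), z = xhat + t • (y - xhat) := ⟨_, rfl⟩
      have hz : z ∈ X := by
        have h1 : z = (1 - t) • xhat + t • y := by rw [hzdef]; module
        rw [h1]
        exact hXcvx hxX hy (by linarith) ht.le (by ring)
      have hc1 := hmin _ hz
      have hc2 : G z ≤ (1 - t) * G xhat + t * G y := by
        have h1 : z = (1 - t) • xhat + t • y := by rw [hzdef]; module
        rw [h1]
        exact hG.2 (Set.mem_univ xhat) (Set.mem_univ y) (by linarith) ht.le (by ring)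
      have e3 : ⟪xhat - x, y - xhat⟫ = -⟪x - xhat, y - xhat⟫ := by
        rw [← inner_neg_left]; congr 1; abel
      have e1' : ρ / 2 * ‖z - x‖ ^ 2
          = ρ / 2 * ‖xhat - x‖ ^ 2 - ρ * (t * ⟪x - xhat, y - xhat⟫)
            + ρ / 2 * (t ^ 2 * ‖y - xhat‖ ^ 2) := by
        have h0 : z - x = (xhat - x) + t • (y - xhat) := by rw [hzdef]; abel
        rw [h0, expand_sq, e3]; ring
      have e2' : ℓ / 2 * ‖z‖ ^ 2
          = ℓ / 2 * ‖xhat‖ ^ 2 + ℓ * (t * ⟪xhat, y - xhat⟫)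
            + ℓ / 2 * (t ^ 2 * ‖y - xhat‖ ^ 2) := by
        rw [hzdef, expand_sq]; ring
      have hGz := hGval z
      have hGx := hGval xhat
      have hwy' : t * ⟪w, y - xhat⟫
          = ρ * (t * ⟪x - xhat, y - xhat⟫) + ℓ * (t * ⟪xhat, y - xhat⟫) := by
        rw [hwinner]; ring
      have hc' : t * (t * c) = (ρ - ℓ) / 2 * (t ^ 2 * ‖y - xhat‖ ^ 2) := by
        rw [hc]; ring
      have h0 : t * 0 ≤ t * (G y + t * c - (G xhat + ⟪w, y - xhat⟫)) := by
        have expand : t * (G y + t * c - (G xhat + ⟪w, y - xhat⟫))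
            = t * G y + t * (t * c) - t * G xhat - t * ⟪w, y - xhat⟫ := by ring
        rw [mul_zero, expand, hwy', hc']
        nlinarith [hc1, hc2, hGz, hGx, e1', e2']
      have hP := le_of_mul_le_mul_left h0 ht
      linarith
    by_contra hcon
    push_neg at hcon
    obtain ⟨δ, hδ⟩ : ∃ δ : ℝ, δ = G xhat + ⟪w, y - xhat⟫ - G y := ⟨_, rfl⟩
    have hδpos : 0 < δ := by linarith
    have hcδ : 0 < c + δ := by linarith
    have ht0 : 0 < δ / (c + δ) := div_pos hδpos hcδ
    have ht1 : δ / (c + δ) ≤ 1 := by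
      rw [div_le_one hcδ]; linarith
    have hk := key _ ht0 ht1
    have h3 : δ / (c + δ) * c < δ := by
      rw [div_mul_eq_mul_div, div_lt_iff₀ hcδ]
      nlinarith [mul_pos hδpos hδpos]
    linarith
  -- Step 2: separation
  obtain ⟨S, hS⟩ : ∃ S : Set (EuclideanSpace ℝ (Fin d) × ℝ),
      S = {p | G p.1 - G xhat - ⟪w, p.1 - xhat⟫ < p.2} := ⟨_, rfl⟩
  have hSopen : IsOpen S := by
    have hGc : Continuous G := by
      rw [← continuousOn_univ]
      exact hG.continuousOn isOpen_univ
    have hcont : Continuous fun p : EuclideanSpace ℝ (Fin d) × ℝ => G p.1 - G xhat - ⟪w, p.1 - xhat⟫ - p.2 :=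
      (((hGc.comp continuous_fst).sub continuous_const).sub
        (continuous_const.inner (continuous_fst.sub continuous_const))).sub continuous_snd
    have : S = (fun p : EuclideanSpace ℝ (Fin d) × ℝ => G p.1 - G xhat - ⟪w, p.1 - xhat⟫ - p.2) ⁻¹' Set.Iio 0 := by
      ext p; simp [hS, sub_lt_iff_lt_add, Set.mem_Iio, sub_neg]
    rw [this]
    exact hcont.isOpen_preimage _ isOpen_Iio
  have hScvx : Convex ℝ S := by
    intro p hp q hq a b ha hb hab
    simp only [hS, Set.mem_setOf_eq] at hp hq ⊢
    have h1 : G (a • p.1 + b • q.1) ≤ a * G p.1 + b * G q.1 :=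
      hG.2 (Set.mem_univ _) (Set.mem_univ _) ha hb hab
    have h2 : ⟪w, a • p.1 + b • q.1 - xhat⟫
        = a * ⟪w, p.1 - xhat⟫ + b * ⟪w, q.1 - xhat⟫ := by
      have : a • p.1 + b • q.1 - xhat = a • (p.1 - xhat) + b • (q.1 - xhat) := by
        match_scalars <;> simp <;> linarith
      rw [this, inner_add_right, real_inner_smul_right, real_inner_smul_right]
    have h3 : a * (G p.1 - G xhat - ⟪w, p.1 - xhat⟫) + b * (G q.1 - G xhat - ⟪w, q.1 - xhat⟫)
        < a * p.2 + b * q.2 := by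
      rcases eq_or_lt_of_le ha with rfl | ha'
      · simp only [zero_mul, zero_add] at *
        have hb1 : b = 1 := by linarith
        nlinarith
      · have := mul_lt_mul_of_pos_left hp ha'
        have := mul_le_mul_of_nonneg_left hq.le hb
        linarith
    have hsmul : (a • p + b • q : EuclideanSpace ℝ (Fin d) × ℝ).1 = a • p.1 + b • q.1 := rfl
    have hsmul2 : (a • p + b • q : EuclideanSpace ℝ (Fin d) × ℝ).2 = a * p.2 + b * q.2 := rfl
    rw [hsmul, hsmul2, h2]
    have h4 : a * G xhat + b * G xhat = G xhat := by rw [← add_mul, hab, one_mul]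
    linarith [h1, h3, h4]
  have hTcvx : Convex ℝ (X ×ˢ ({0} : Set ℝ)) := hXcvx.prod (convex_singleton 0)
  have hdisj : Disjoint S (X ×ˢ ({0} : Set ℝ)) := by
    rw [Set.disjoint_left]
    rintro ⟨y, t⟩ hpS ⟨hyX, ht0⟩
    simp only [Set.mem_singleton_iff] at ht0
    simp only [hS, Set.mem_setOf_eq] at hpS
    have := hφX y hyX
    rw [ht0] at hpS
    linarith
  obtain ⟨f, u, hfs, hfT⟩ := geometric_hahn_banach_open hScvx hSopen hTcvx hdisj
  -- decompose f
  have hfdec : ∀ (y : EuclideanSpace ℝ (Fin d)) (t : ℝ), f (y, t) = f (y, 0) + t * f ((0 : EuclideanSpace ℝ (Fin d)), (1 : ℝ)) := by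
    intro y t
    have : ((y, t) : EuclideanSpace ℝ (Fin d) × ℝ) = (y, 0) + t • ((0 : EuclideanSpace ℝ (Fin d)), (1 : ℝ)) := by
      simp [Prod.ext_iff]
    rw [this, f.map_add, f.map_smul, smul_eq_mul]
  obtain ⟨s₀, hs₀⟩ : ∃ s₀ : ℝ, s₀ = f ((0 : EuclideanSpace ℝ (Fin d)), (1 : ℝ)) := ⟨_, rfl⟩
  have hxhat0 : ((xhat, (0:ℝ)) : EuclideanSpace ℝ (Fin d) × ℝ) ∈ X ×ˢ ({0} : Set ℝ) := ⟨hxX, rfl⟩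
  have hu1 : u ≤ f (xhat, 0) := hfT _ hxhat0
  have hmemS : ∀ ε : ℝ, 0 < ε → ((xhat, ε) : EuclideanSpace ℝ (Fin d) × ℝ) ∈ S := by
    intro ε hε
    simp only [hS, Set.mem_setOf_eq, sub_self, inner_zero_right]
    simpa using hε
  have hs₀neg : s₀ < 0 := by
    have h1 := hfs _ (hmemS 1 one_pos)
    rw [hfdec] at h1
    linarith
  -- global inequality
  have hglobal : ∀ y : EuclideanSpace ℝ (Fin d), f (y, 0) + (G y - G xhat - ⟪w, y - xhat⟫) * s₀ ≤ u := by
    intro y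
    by_contra hcon
    push_neg at hcon
    obtain ⟨φy, hφy⟩ : ∃ φy : ℝ, φy = G y - G xhat - ⟪w, y - xhat⟫ := ⟨_, rfl⟩
    obtain ⟨ε, hε⟩ : ∃ ε : ℝ, ε = (f (y, 0) + φy * s₀ - u) / (-s₀) := ⟨_, rfl⟩
    rw [← hφy] at hcon
    have hεpos : 0 < ε := by
      rw [hε]; exact div_pos (by linarith) (by linarith)
    have hmem : ((y, φy + ε) : EuclideanSpace ℝ (Fin d) × ℝ) ∈ S := by
      simp only [hS, Set.mem_setOf_eq]
      rw [← hφy]; linarith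
    have hlt := hfs _ hmem
    rw [hfdec, ← hs₀] at hlt
    have hs0ne : s₀ ≠ 0 := ne_of_lt hs₀neg
    have hεs : ε * s₀ = -(f (y, 0) + φy * s₀ - u) := by
      rw [hε]; field_simp [hs0ne]
    have hexp : (φy + ε) * s₀ = φy * s₀ + ε * s₀ := by ring
    linarith
  have hxhatle : f (xhat, 0) ≤ u := by
    have := hglobal xhat
    simp only [sub_self, inner_zero_right] at this
    linarith [this]
  have huf : u = f (xhat, 0) := le_antisymm hu1 hxhatle
  -- represent the linear part
  obtain ⟨v, hv⟩ : ∃ v : EuclideanSpace ℝ (Fin d),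
      v = (InnerProductSpace.toDual ℝ _).symm (f.comp (ContinuousLinearMap.inl ℝ _ ℝ)) := ⟨_, rfl⟩
  have hvinner : ∀ y : EuclideanSpace ℝ (Fin d), ⟪v, y⟫ = f (y, 0) := by
    intro y
    rw [hv]
    simp [InnerProductSpace.toDual_symm_apply, ContinuousLinearMap.comp_apply,
      ContinuousLinearMap.inl_apply]
  obtain ⟨lam, hlam⟩ : ∃ lam : ℝ, lam = (-s₀)⁻¹ := ⟨_, rfl⟩
  have hlampos : 0 < lam := by rw [hlam]; exact inv_pos.mpr (by linarith)
  obtain ⟨ghat, hghat⟩ : ∃ g : EuclideanSpace ℝ (Fin d), g = ρ • (x - xhat) + lam • v := ⟨_, rfl⟩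
  have hginner : ∀ z : EuclideanSpace ℝ (Fin d), ⟪ghat, z⟫ = ρ * ⟪x - xhat, z⟫ + lam * ⟪v, z⟫ := by
    intro z; rw [hghat, inner_add_left, real_inner_smul_left, real_inner_smul_left]
  -- subgradient inequality from hglobal
  have hsub : ∀ y : EuclideanSpace ℝ (Fin d), lam * ⟪v, y - xhat⟫ ≤ G y - G xhat - ⟪w, y - xhat⟫ := by
    intro y
    have h1 := hglobal y
    rw [huf] at h1
    have h2 : ⟪v, y - xhat⟫ = f (y, 0) - f (xhat, 0) := by
      rw [inner_sub_right, hvinner, hvinner]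
    have h3 : ⟪v, y - xhat⟫ ≤ (G y - G xhat - ⟪w, y - xhat⟫) * (-s₀) := by
      have hr : (G y - G xhat - ⟪w, y - xhat⟫) * (-s₀)
          = -((G y - G xhat - ⟪w, y - xhat⟫) * s₀) := by ring
      linarith
    calc lam * ⟪v, y - xhat⟫ ≤ lam * ((G y - G xhat - ⟪w, y - xhat⟫) * (-s₀)) :=
          mul_le_mul_of_nonneg_left h3 hlampos.le
      _ = G y - G xhat - ⟪w, y - xhat⟫ := by
          have hns : (-s₀) ≠ 0 := ne_of_gt (by linarith)
          rw [hlam, mul_comm (G y - G xhat - ⟪w, y - xhat⟫) (-s₀), inv_mul_cancel_left₀ hns]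
  -- normal cone inequality
  have hnc : ∀ y ∈ X, 0 ≤ ⟪v, y - xhat⟫ := by
    intro y hy
    have h1 : u ≤ f (y, 0) := hfT _ ⟨hy, rfl⟩
    rw [inner_sub_right, hvinner, hvinner]
    rw [huf] at h1
    linarith
  refine ⟨ghat, ?_, ?_⟩
  · -- ghat ∈ WCSubdiff
    intro y
    have h1 := hsub y
    have h2 := hwinner (y - xhat)
    have h3 := hginner (y - xhat)
    have e1 : ℓ / 2 * ‖y - xhat‖ ^ 2
        = ℓ / 2 * ‖y‖ ^ 2 - ℓ * ⟪xhat, y⟫ + ℓ / 2 * ‖xhat‖ ^ 2 := by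
      rw [norm_sub_sq_real]; ring_nf
      rw [real_inner_comm]; ring
    have e2 : ℓ * ⟪xhat, y - xhat⟫ = ℓ * ⟪xhat, y⟫ - ℓ * ‖xhat‖ ^ 2 := by
      rw [inner_sub_right, real_inner_self_eq_norm_sq]; ring
    have hGx := hGval xhat
    have hGy := hGval y
    linarith
  · -- projection
    intro η hη
    refine ⟨hxX, ?_⟩
    intro y hy
    obtain ⟨p, hp⟩ : ∃ p : EuclideanSpace ℝ (Fin d),
      p = (η * ρ) • x - η • ghat + (1 - η * ρ) • xhat := ⟨_, rfl⟩
    have hkey : xhat - p = (η * lam) • v := by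
      rw [hp, hghat]; module
    have h1 : y - p = (y - xhat) + (η * lam) • v := by
      rw [← hkey]; abel
    have h2 : ‖y - p‖ ^ 2 = ‖y - xhat‖ ^ 2 + 2 * ⟪y - xhat, (η * lam) • v⟫ + ‖(η * lam) • v‖ ^ 2 := by
      rw [h1, norm_add_sq_real]
    have h3 : 0 ≤ ⟪y - xhat, (η * lam) • v⟫ := by
      rw [real_inner_smul_right, real_inner_comm]
      exact mul_nonneg (by positivity) (hnc y hy)
    have h4 : ‖xhat - p‖ = ‖(η * lam) • v‖ := by rw [hkey]
    have h5 : ‖xhat - p‖ ^ 2 ≤ ‖y - p‖ ^ 2 := by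
      rw [h4, h2]
      nlinarith [sq_nonneg ‖y - xhat‖]
    rw [← hp]
    calc ‖xhat - p‖ = Real.sqrt (‖xhat - p‖ ^ 2) := (Real.sqrt_sq (norm_nonneg _)).symm
      _ ≤ Real.sqrt (‖y - p‖ ^ 2) := Real.sqrt_le_sqrt h5
      _ = ‖y - p‖ := Real.sqrt_sq (norm_nonneg _)
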